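/- The selector σ_K is left-continuous on (0, λ(K)]. -/

import Mathlib

open MeasureTheory Set Filter

/-- Measure projection `π_K`. -/
noncomputable def piProj (K : Set ℝ) (x : ℝ) : ℝ :=
  (volume (Set.Icc (sInf K) x ∩ K)).toReal

/-- Left-endpoint selector `σ_K`. -/
noncomputable def sigmaSel (K : Set ℝ) (t : ℝ) : ℝ :=
  sInf {x ∈ K | piProj K x = t}

section Aux

variable {K : Set ℝ}

lemma piProj_fin (hK : IsCompact K) (x : ℝ) :
    volume (Set.Icc (sInf K) x ∩ K) ≠ ⊤ :=
  ((measure_mono inter_subset_right).trans_lt hK.measure_lt_top).ne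

lemma piProj_nonneg (x : ℝ) : 0 ≤ piProj K x := ENNReal.toReal_nonneg

lemma piProj_mono (hK : IsCompact K) : Monotone (piProj K) := fun x y hxy =>
  ENNReal.toReal_mono (piProj_fin hK y)
    (measure_mono (inter_subset_inter_left _ (Set.Icc_subset_Icc_right hxy)))

lemma piProj_key (hK : IsCompact K) {x y : ℝ} (hxy : x ≤ y) :
    piProj K y ≤ piProj K x + (y - x) := by
  have hsub : Set.Icc (sInf K) y ∩ K ⊆ (Set.Icc (sInf K) x ∩ K) ∪ Set.Ioc x y := by
    rintro z ⟨⟨h1, h2⟩, hz⟩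
    rcases le_or_gt z x with h | h
    · exact Or.inl ⟨⟨h1, h⟩, hz⟩
    · exact Or.inr ⟨h, h2⟩
  have hle : volume (Set.Icc (sInf K) y ∩ K)
      ≤ volume (Set.Icc (sInf K) x ∩ K) + ENNReal.ofReal (y - x) := by
    calc volume (Set.Icc (sInf K) y ∩ K)
        ≤ volume ((Set.Icc (sInf K) x ∩ K) ∪ Set.Ioc x y) := measure_mono hsub
      _ ≤ volume (Set.Icc (sInf K) x ∩ K) + volume (Set.Ioc x y) := measure_union_le _ _
      _ = volume (Set.Icc (sInf K) x ∩ K) + ENNReal.ofReal (y - x) := by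
          rw [Real.volume_Ioc]
  have h2 := ENNReal.toReal_mono
    (by exact ENNReal.add_ne_top.2 ⟨piProj_fin hK x, ENNReal.ofReal_ne_top⟩) hle
  rwa [ENNReal.toReal_add (piProj_fin hK x) ENNReal.ofReal_ne_top,
    ENNReal.toReal_ofReal (sub_nonneg.2 hxy)] at h2

lemma piProj_lip (hK : IsCompact K) : LipschitzWith 1 (piProj K) := by
  apply LipschitzWith.of_dist_le_mul
  intro x y
  rw [Real.dist_eq, Real.dist_eq, NNReal.coe_one, one_mul]
  rcases le_total x y with h | h
  · rw [abs_sub_le_iff]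
    constructor
    · have := piProj_mono hK h
      have h0 : (0:ℝ) ≤ |x - y| := abs_nonneg _
      linarith
    · have := piProj_key hK h
      have : piProj K y - piProj K x ≤ y - x := by linarith
      calc piProj K y - piProj K x ≤ y - x := this
        _ ≤ |y - x| := le_abs_self _
        _ = |x - y| := abs_sub_comm _ _
  · rw [abs_sub_le_iff]
    constructor
    · have := piProj_key hK h
      have : piProj K x - piProj K y ≤ x - y := by linarith
      calc piProj K x - piProj K y ≤ x - y := this
        _ ≤ |x - y| := le_abs_self _
    · have := piProj_mono hK h
      have h0 : (0:ℝ) ≤ |x - y| := abs_nonneg _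
      linarith

/-- Push a point down onto `K` without changing `piProj`. -/
lemma piProj_pushdown (hK : IsCompact K) (x : ℝ)
    (hne : (K ∩ Set.Iic x).Nonempty) :
    ∃ y ∈ K, y ≤ x ∧ piProj K y = piProj K x := by
  have hcpt : IsCompact (K ∩ Set.Iic x) := hK.inter_right isClosed_Iic
  have hy := hcpt.sSup_mem hne
  set y := sSup (K ∩ Set.Iic x) with hydef
  refine ⟨y, hy.1, hy.2, ?_⟩
  have hset : Set.Icc (sInf K) y ∩ K = Set.Icc (sInf K) x ∩ K := by
    ext z
    constructor
    · rintro ⟨⟨h1, h2⟩, hz⟩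
      exact ⟨⟨h1, h2.trans hy.2⟩, hz⟩
    · rintro ⟨⟨h1, h2⟩, hz⟩
      have : z ≤ y := le_csSup (hcpt.bddAbove) ⟨hz, h2⟩
      exact ⟨⟨h1, this⟩, hz⟩
  unfold piProj
  rw [hset]

lemma level_set_attained (hK : IsCompact K) (hpos : 0 < volume K)
    {t : ℝ} (ht : t ∈ Set.Ioc (0 : ℝ) (volume K).toReal) :
    sigmaSel K t ∈ K ∧ piProj K (sigmaSel K t) = t := by
  have hne : K.Nonempty := nonempty_of_measure_ne_zero hpos.ne'
  have ha : sInf K ∈ K := hK.sInf_mem hne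
  have hb : sSup K ∈ K := hK.sSup_mem hne
  have hab : sInf K ≤ sSup K := csInf_le_csSup hne hK.bddBelow hK.bddAbove
  -- piProj at the endpoints
  have hpa : piProj K (sInf K) = 0 := by
    unfold piProj
    have : Set.Icc (sInf K) (sInf K) ∩ K ⊆ {sInf K} := by
      rintro z ⟨hz1, _⟩
      simpa using hz1
    have h0 : volume (Set.Icc (sInf K) (sInf K) ∩ K) = 0 :=
      le_antisymm ((measure_mono this).trans (by simp)) zero_le
    rw [h0, ENNReal.toReal_zero]
  have hpb : piProj K (sSup K) = (volume K).toReal := by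
    unfold piProj
    congr 1
    have : Set.Icc (sInf K) (sSup K) ∩ K = K := by
      apply Set.inter_eq_self_of_subset_right
      intro k hk
      exact ⟨csInf_le hK.bddBelow hk, le_csSup hK.bddAbove hk⟩
    rw [this]
  -- IVT
  have hcont : ContinuousOn (piProj K) (Set.Icc (sInf K) (sSup K)) :=
    (piProj_lip hK).continuous.continuousOn
  have hmem : t ∈ Set.Icc (piProj K (sInf K)) (piProj K (sSup K)) := by
    rw [hpa, hpb]; exact ⟨ht.1.le, ht.2⟩
  obtain ⟨x, hx, hπx⟩ := intermediate_value_Icc hab hcont hmem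
  -- push down onto K
  obtain ⟨y, hyK, hyx, hπy⟩ := piProj_pushdown hK x ⟨sInf K, ha, hx.1⟩
  have hyS : y ∈ {x ∈ K | piProj K x = t} := ⟨hyK, hπy.trans hπx⟩
  -- the level set is compact nonempty
  have hScpt : IsCompact {x ∈ K | piProj K x = t} := by
    have : {x ∈ K | piProj K x = t} = K ∩ (piProj K) ⁻¹' {t} := by
      ext z; simp [Set.mem_sep_iff]
    rw [this]
    exact hK.inter_right (isClosed_singleton.preimage (piProj_lip hK).continuous)
  have hSmem := hScpt.sInf_mem ⟨y, hyS⟩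
  exact ⟨hSmem.1, hSmem.2⟩

lemma piProj_lt_of_lt_sigma (hK : IsCompact K) (hpos : 0 < volume K)
    {t : ℝ} (ht : t ∈ Set.Ioc (0 : ℝ) (volume K).toReal)
    {z : ℝ} (hz : z < sigmaSel K t) : piProj K z < t := by
  obtain ⟨hσK, hσπ⟩ := level_set_attained hK hpos ht
  rcases lt_or_ge (piProj K z) t with h | h
  · exact h
  have hzt : piProj K z = t :=
    le_antisymm (hσπ ▸ piProj_mono hK hz.le) h
  -- push down to K and contradict minimality
  have hKz : (K ∩ Set.Iic z).Nonempty := by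
    by_contra hemp
    rw [Set.not_nonempty_iff_eq_empty] at hemp
    have : Set.Icc (sInf K) z ∩ K = ∅ := by
      rw [Set.eq_empty_iff_forall_notMem] at hemp ⊢
      rintro w ⟨⟨_, hw2⟩, hwK⟩
      exact hemp w ⟨hwK, hw2⟩
    have : piProj K z = 0 := by unfold piProj; simp [this]
    rw [this] at hzt
    exact absurd hzt.symm ht.1.ne'
  obtain ⟨y, hyK, hyz, hπy⟩ := piProj_pushdown hK z hKz
  have hyS : y ∈ {x ∈ K | piProj K x = t} := ⟨hyK, hπy.trans hzt⟩
  have hSbdd : BddBelow {x ∈ K | piProj K x = t} :=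
    hK.bddBelow.mono (Set.sep_subset _ _)
  have : sigmaSel K t ≤ y := csInf_le hSbdd hyS
  linarith

end Aux

theorem stmt5 (K : Set ℝ) (hK : IsCompact K) (hpos : 0 < volume K) :
    ∀ t ∈ Set.Ioc (0 : ℝ) (volume K).toReal,
      Tendsto (sigmaSel K) (nhdsWithin t (Set.Iio t)) (nhds (sigmaSel K t)) := by
  intro t ht
  obtain ⟨hσK, hσπ⟩ := level_set_attained hK hpos ht
  rw [Metric.tendsto_nhdsWithin_nhds]
  intro ε hε
  set x0 := sigmaSel K t with hx0
  have hgap : piProj K (x0 - ε) < t :=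
    piProj_lt_of_lt_sigma hK hpos ht (by linarith)
  refine ⟨t - piProj K (x0 - ε), by linarith, ?_⟩
  intro s hs hds
  rw [Real.dist_eq] at hds
  have hslt : s < t := hs
  have hsl : piProj K (x0 - ε) < s := by
    rw [abs_of_nonpos (by linarith)] at hds
    linarith
  have hs0 : s ∈ Set.Ioc (0 : ℝ) (volume K).toReal :=
    ⟨lt_of_le_of_lt (piProj_nonneg _) hsl, hslt.le.trans ht.2⟩
  obtain ⟨hsK, hsπ⟩ := level_set_attained hK hpos hs0
  -- σ s ≤ x0
  have h1 : sigmaSel K s ≤ x0 := by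
    by_contra h
    push_neg at h
    have := piProj_mono hK h.le
    rw [hσπ, hsπ] at this
    linarith
  -- x0 - ε < σ s
  have h2 : x0 - ε < sigmaSel K s := by
    by_contra h
    push_neg at h
    have := piProj_mono hK h
    rw [hsπ] at this
    linarith
  rw [Real.dist_eq, abs_lt]
  constructor <;> linarith
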